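/- For any integer c ≥ 3, the c-forced gadget F_c admits a c-gel, and for any good edge-labeling λ : E(F_c) → {1, …, c} of F_c, the label of the bone of F_c satisfies λ(v v_1) ∈ {1, c}. -/

import Mathlib

/-- A walk is *increasing* with respect to an edge-labeling if the sequence of labels of its
edges, traversed from the first endpoint to the last, is non-decreasing. -/
def IsIncreasing {V : Type*} (G : SimpleGraph V) (lab : Sym2 V → ℝ) {x y : V}
    (p : G.Walk x y) : Prop :=
  (p.edges.map lab).Chain' (· ≤ ·)

/-- An edge-labeling is *good* if for every ordered pair `(x, y)` of vertices there do not
exist two distinct increasing paths from `x` to `y`. -/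
def IsGoodLabeling {V : Type*} (G : SimpleGraph V) (lab : Sym2 V → ℝ) : Prop :=
  ∀ (x y : V) (p q : G.Walk x y), p.IsPath → q.IsPath →
    IsIncreasing G lab p → IsIncreasing G lab q → p = q

/-- The vertices of the `c`-forced gadget `F_c`:
* `Sum.inl ()` is the vertex `v` of the `(c-1)`-color gadget `D_{c-1}`;
* `Sum.inr (Sum.inl i)` for `i : Fin (c-1)` is the vertex `v_{i+1}` of `D_{c-1}`
  (so index `0` corresponds to `v_1`);
* `Sum.inr (Sum.inr (Sum.inl p))` with `p.1 < p.2` is the vertex `v_{i,j}` of `D_{c-1}`;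
* `Sum.inr (Sum.inr (Sum.inr (x, t)))`, for `x : {i : Fin (c-1) // i.val ≠ 0}` and `t : Fin 5`,
  are the five extra vertices of the copy `X_{x+1}` of the extremal gadget whose bone is
  identified with the edge `v v_{x+1}`: `t = 0` is the vertex `a` of `X_{x+1}`, `t = 1, 2`
  are the two middle vertices of the two `2`-paths from `a` to `v`, and `t = 3, 4` are the
  two middle vertices of the two `2`-paths from `a` to `v_{x+1}`. -/
def FVert (c : ℕ) : Type :=
  Unit ⊕ Fin (c - 1) ⊕ {p : Fin (c - 1) × Fin (c - 1) // p.1 < p.2} ⊕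
    ({i : Fin (c - 1) // i.val ≠ 0} × Fin 5)

/-- The `c`-forced gadget `F_c`: the `(c-1)`-color gadget `D_{c-1}` where, for each
`i ∈ {2, …, c-1}`, the edge `v v_i` is identified with the bone of a copy of the extremal
gadget. Its bone is the edge `v v_1`. -/
def FGadget (c : ℕ) : SimpleGraph (FVert c) :=
  SimpleGraph.fromRel (fun a b =>
    (∃ i : Fin (c - 1), a = Sum.inl () ∧ b = Sum.inr (Sum.inl i)) ∨
    (∃ (i : Fin (c - 1)) (p : {p : Fin (c - 1) × Fin (c - 1) // p.1 < p.2}),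
      a = Sum.inr (Sum.inl i) ∧ b = Sum.inr (Sum.inr (Sum.inl p)) ∧
      (p.val.1 = i ∨ p.val.2 = i)) ∨
    (∃ (x : {i : Fin (c - 1) // i.val ≠ 0}) (t : Fin 5), t ≠ 0 ∧
      a = Sum.inr (Sum.inr (Sum.inr (x, 0))) ∧ b = Sum.inr (Sum.inr (Sum.inr (x, t)))) ∨
    (∃ (x : {i : Fin (c - 1) // i.val ≠ 0}) (t : Fin 5), (t = 1 ∨ t = 2) ∧
      a = Sum.inr (Sum.inr (Sum.inr (x, t))) ∧ b = Sum.inl ()) ∨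
    (∃ (x : {i : Fin (c - 1) // i.val ≠ 0}) (t : Fin 5), (t = 3 ∨ t = 4) ∧
      a = Sum.inr (Sum.inr (Sum.inr (x, t))) ∧ b = Sum.inr (Sum.inl x.val)))

attribute [reducible] FVert

namespace FG


variable {c : ℕ}

abbrev Pr (c : ℕ) := {p : Fin (c - 1) × Fin (c - 1) // p.1 < p.2}
abbrev Xi (c : ℕ) := {i : Fin (c - 1) // i.val ≠ 0}

def vv : FVert c := Sum.inl ()
def bi (i : Fin (c - 1)) : FVert c := Sum.inr (Sum.inl i)
def gi (p : Pr c) : FVert c := Sum.inr (Sum.inr (Sum.inl p))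
def mx (x : Xi c) (t : Fin 5) : FVert c := Sum.inr (Sum.inr (Sum.inr (x, t)))

def labf (c : ℕ) :
    (Unit ⊕ Fin (c - 1) ⊕ Pr c ⊕ (Xi c × Fin 5)) →
    (Unit ⊕ Fin (c - 1) ⊕ Pr c ⊕ (Xi c × Fin 5)) → ℝ
  | Sum.inl _, Sum.inr (Sum.inl i) => (i : ℕ) + 1
  | Sum.inr (Sum.inl i), Sum.inl _ => (i : ℕ) + 1
  | Sum.inr (Sum.inl i), Sum.inr (Sum.inr (Sum.inl p)) => if p.val.1 = i then (c : ℝ) else 1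
  | Sum.inr (Sum.inr (Sum.inl p)), Sum.inr (Sum.inl i) => if p.val.1 = i then (c : ℝ) else 1
  | Sum.inl _, Sum.inr (Sum.inr (Sum.inr (_, t))) => if t = 2 then (c : ℝ) else 1
  | Sum.inr (Sum.inr (Sum.inr (_, t))), Sum.inl _ => if t = 2 then (c : ℝ) else 1
  | Sum.inr (Sum.inl _), Sum.inr (Sum.inr (Sum.inr (_, t))) => if t = 4 then (c : ℝ) else 1
  | Sum.inr (Sum.inr (Sum.inr (_, t))), Sum.inr (Sum.inl _) => if t = 4 then (c : ℝ) else 1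
  | Sum.inr (Sum.inr (Sum.inr (_, s))), Sum.inr (Sum.inr (Sum.inr (_, t))) =>
      if s = 0 then (if t = 1 ∨ t = 3 then (c : ℝ) else 1)
      else if t = 0 then (if s = 1 ∨ s = 3 then (c : ℝ) else 1) else 1
  | _, _ => 1

lemma labf_symm (c : ℕ) : ∀ a b, labf c a b = labf c b a := by
  rintro (a | a | a | ⟨x, s⟩) (b | b | b | ⟨y, t⟩) <;> simp [labf]
  by_cases hs : s = 0 <;> by_cases ht : t = 0 <;> simp [hs, ht]

def lab (c : ℕ) : Sym2 (FVert c) → ℝ := Sym2.lift ⟨labf c, labf_symm c⟩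

@[simp] lemma lab_mk (z z' : FVert c) : lab c s(z, z') = labf c z z' := rfl

def c1f : FVert c → FVert c
  | Sum.inl _ => vv
  | Sum.inr (Sum.inl i) => if i.val = 0 then vv else bi i
  | Sum.inr (Sum.inr (Sum.inl p)) => bi p.val.2
  | Sum.inr (Sum.inr (Sum.inr (x, t))) =>
      if t = 1 then vv else if t = 3 then bi x.val else mx x 0

def ccf : FVert c → FVert c
  | Sum.inl _ => vv
  | Sum.inr (Sum.inl i) => bi i
  | Sum.inr (Sum.inr (Sum.inl p)) => bi p.val.1
  | Sum.inr (Sum.inr (Sum.inr (x, t))) =>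
      if t = 2 then vv else if t = 4 then bi x.val else mx x 0

def midV (z : FVert c) : Prop := z = vv ∨ ∃ i : Fin (c - 1), i.val ≠ 0 ∧ z = bi i

def C1 (c : ℕ) (z z' : FVert c) : Prop :=
  lab c s(z, z') = 1 ∧ c1f z = c1f z' ∧ (c1f z = z ∨ c1f z' = z')

def CM (c : ℕ) (z z' : FVert c) : Prop :=
  (z = vv ∨ z' = vv) ∧ midV z ∧ midV z' ∧ 2 ≤ lab c s(z, z') ∧ lab c s(z, z') ≤ (c : ℝ) - 1

def CC (c : ℕ) (z z' : FVert c) : Prop :=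
  lab c s(z, z') = (c : ℝ) ∧ ccf z = ccf z' ∧ (ccf z = z ∨ ccf z' = z')

lemma C1.symm {z z' : FVert c} (h : C1 c z z') : C1 c z' z := by
  obtain ⟨h1, h2, h3⟩ := h
  exact ⟨by rwa [Sym2.eq_swap], h2.symm, h3.symm⟩

lemma CM.symm {z z' : FVert c} (h : CM c z z') : CM c z' z := by
  obtain ⟨h1, h2, h3, h4, h5⟩ := h
  exact ⟨h1.symm, h3, h2, by rwa [Sym2.eq_swap], by rwa [Sym2.eq_swap]⟩

lemma CC.symm {z z' : FVert c} (h : CC c z z') : CC c z' z := by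
  obtain ⟨h1, h2, h3⟩ := h
  exact ⟨by rwa [Sym2.eq_swap], h2.symm, h3.symm⟩

lemma edge_cases (hc : 3 ≤ c) {z z' : FVert c} (h : (FGadget c).Adj z z') :
    C1 c z z' ∨ CM c z z' ∨ CC c z z' := by
  have key : ∀ z z' : FVert c,
      ((∃ i : Fin (c - 1), z = Sum.inl () ∧ z' = Sum.inr (Sum.inl i)) ∨
      (∃ (i : Fin (c - 1)) (p : {p : Fin (c - 1) × Fin (c - 1) // p.1 < p.2}),
        z = Sum.inr (Sum.inl i) ∧ z' = Sum.inr (Sum.inr (Sum.inl p)) ∧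
        (p.val.1 = i ∨ p.val.2 = i)) ∨
      (∃ (x : {i : Fin (c - 1) // i.val ≠ 0}) (t : Fin 5), t ≠ 0 ∧
        z = Sum.inr (Sum.inr (Sum.inr (x, 0))) ∧ z' = Sum.inr (Sum.inr (Sum.inr (x, t)))) ∨
      (∃ (x : {i : Fin (c - 1) // i.val ≠ 0}) (t : Fin 5), (t = 1 ∨ t = 2) ∧
        z = Sum.inr (Sum.inr (Sum.inr (x, t))) ∧ z' = Sum.inl ()) ∨
      (∃ (x : {i : Fin (c - 1) // i.val ≠ 0}) (t : Fin 5), (t = 3 ∨ t = 4) ∧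
        z = Sum.inr (Sum.inr (Sum.inr (x, t))) ∧ z' = Sum.inr (Sum.inl x.val))) →
      C1 c z z' ∨ CM c z z' ∨ CC c z z' := by
    clear h z z'
    intro z z' h
    obtain (⟨i, rfl, rfl⟩ | ⟨i, p, rfl, rfl, hp⟩ | ⟨x, t, ht, rfl, rfl⟩ |
        ⟨x, t, ht, rfl, rfl⟩ | ⟨x, t, ht, rfl, rfl⟩) := h
    · -- v -- b_i
      by_cases h0 : i.val = 0
      · refine Or.inl ⟨?_, ?_, Or.inl rfl⟩
        · simp [labf, h0]
        · simp [c1f, h0, vv]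
      · refine Or.inr (Or.inl ⟨Or.inl rfl, Or.inl rfl, Or.inr ⟨i, h0, rfl⟩, ?_, ?_⟩)
        · have : 1 ≤ i.val := Nat.one_le_iff_ne_zero.mpr h0
          have : (1 : ℝ) ≤ (i.val : ℝ) := by exact_mod_cast this
          simp only [lab_mk, labf]
          linarith
        · have h1 : i.val + 2 ≤ c := by have := i.isLt; omega
          have : (i.val : ℝ) + 2 ≤ (c : ℝ) := by exact_mod_cast h1
          simp only [lab_mk, labf]
          linarith
    · -- b_i -- g_p
      rcases hp with hp | hp
      · refine Or.inr (Or.inr ⟨?_, ?_, Or.inl ?_⟩)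
        · simp [labf, hp]
        · simp [ccf, hp]
        · simp [ccf, bi]
      · have hne1 : p.val.1 ≠ i := by
          have := p.property; rw [← hp]; exact Fin.ne_of_lt this
        have hi0 : i.val ≠ 0 := by
          have := p.property
          rw [← hp]
          have : p.val.1.val < p.val.2.val := this
          omega
        refine Or.inl ⟨?_, ?_, Or.inl ?_⟩
        · simp [labf, hne1]
        · simp [c1f, hp, hi0]
        · simp [c1f, hi0, bi]
    · -- a_x -- m_t
      fin_cases t
      · exact absurd rfl ht
      · refine Or.inr (Or.inr ⟨by simp [labf], by simp [ccf, mx], by simp [ccf, mx]⟩)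
      · refine Or.inl ⟨by simp [labf], by simp [c1f, mx], by simp [c1f, mx]⟩
      · refine Or.inr (Or.inr ⟨by simp [labf], by simp [ccf, mx], by simp [ccf, mx]⟩)
      · refine Or.inl ⟨by simp [labf], by simp [c1f, mx], by simp [c1f, mx]⟩
    · -- m_t -- v  (t = 1 or 2)
      rcases ht with rfl | rfl
      · exact Or.inl ⟨by simp [labf], by simp [c1f, vv], Or.inr (by simp [c1f, vv])⟩
      · exact Or.inr (Or.inr ⟨by simp [labf], by simp [ccf, vv], Or.inr (by simp [ccf, vv])⟩)
    · -- m_t -- b_x (t = 3 or 4)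
      rcases ht with rfl | rfl
      · exact Or.inl ⟨by simp [labf], by simp [c1f, x.property], Or.inr (by simp [c1f, x.property, bi])⟩
      · exact Or.inr (Or.inr ⟨by simp [labf], by simp [ccf], Or.inr (by simp [ccf, bi])⟩)
  rw [FGadget, SimpleGraph.fromRel_adj] at h
  obtain ⟨hne, h | h⟩ := h
  · exact key _ _ h
  · rcases key _ _ h with h' | h' | h'
    · exact Or.inl h'.symm
    · exact Or.inr (Or.inl h'.symm)
    · exact Or.inr (Or.inr h'.symm)




section Star

variable {V : Type*} {G : SimpleGraph V} (S : V → V → Prop)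

/-- all darts of a walk satisfy S -/
def DW {x y : V} (q : G.Walk x y) : Prop := ∀ d ∈ q.darts, S d.toProd.1 d.toProd.2

lemma DW.of_cons {x z y : V} {h : G.Adj x z} {q : G.Walk z y}
    (hd : DW S (SimpleGraph.Walk.cons h q)) : DW S q := by
  intro d hdq; exact hd d (by simp [SimpleGraph.Walk.darts_cons, hdq])

lemma DW.head {x z y : V} {h : G.Adj x z} {q : G.Walk z y}
    (hd : DW S (SimpleGraph.Walk.cons h q)) : S x z := by
  exact hd ⟨(x, z), h⟩ (by simp [SimpleGraph.Walk.darts_cons])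

lemma DW.nil {x : V} : DW S (SimpleGraph.Walk.nil : G.Walk x x) := by
  intro d hd; simp [SimpleGraph.Walk.darts_nil] at hd

lemma DW.cons {x z y : V} {h : G.Adj x z} {q : G.Walk z y}
    (hs : S x z) (hd : DW S q) : DW S (SimpleGraph.Walk.cons h q) := by
  intro d hdq
  simp only [SimpleGraph.Walk.darts_cons, List.mem_cons] at hdq
  rcases hdq with rfl | hdq
  · exact hs
  · exact hd d hdq

lemma dw_const (f : V → V) (hS : ∀ z z', S z z' → f z = f z' ∧ (f z = z ∨ f z' = z'))
    {x u : V} (q : G.Walk x u) (hq : DW S q) : f x = f u := by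
  induction q with
  | nil => rfl
  | cons h q ih => exact ((hS _ _ (DW.head S hq)).1).trans (ih (hq.of_cons S))

lemma star_uniq (f : V → V) (hS : ∀ z z', S z z' → f z = f z' ∧ (f z = z ∨ f z' = z')) :
    ∀ (n : ℕ) {x u : V} (q r : G.Walk x u), q.length ≤ n →
    q.IsPath → r.IsPath → DW S q → DW S r → q = r := by
  intro n
  induction n with
  | zero =>
    intro x u q r hl hq hr _ _
    cases q with
    | nil =>
      exact (SimpleGraph.Walk.isPath_iff_eq_nil.mp hr).symm
    | cons h q' => simp [SimpleGraph.Walk.length_cons] at hl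
  | succ n ih =>
    intro x u q r hl hq hr hdq hdr
    cases q with
    | nil => exact (SimpleGraph.Walk.isPath_iff_eq_nil.mp hr).symm
    | cons h q' =>
      rename_i z
      cases r with
      | nil =>
        exact absurd (SimpleGraph.Walk.isPath_iff_eq_nil.mp hq) (by simp)
      | cons h' r' =>
        rename_i z'
        have Sxz : S x z := hdq.head S
        have Sxz' : S x z' := hdr.head S
        by_cases hx : f x = x
        · -- x is the center; both walks must be single edges
          have hq'nil : ∀ (w : V) (hw : G.Adj x w) (t : G.Walk w u),
              DW S (SimpleGraph.Walk.cons hw t) →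
              (SimpleGraph.Walk.cons hw t).IsPath → S x w → t.length = 0 := by
            intro w hw t hdt hpt Sxw
            cases t with
            | nil => rfl
            | cons h2 t' =>
              rename_i z2
              have Swz2 : S w z2 := (hdt.of_cons S).head S
              have h1 := hS _ _ Sxw
              have h2' := hS _ _ Swz2
              have hwne : w ≠ x := (G.ne_of_adj hw).symm
              have hfw : f w = x := by rw [← h1.1, hx]
              have hwc : f z2 = z2 := by
                rcases h2'.2 with hh | hh
                · exact absurd (by rw [← hfw, hh]) hwne
                · exact hh
              have : z2 = x := by rw [← hwc, ← h2'.1, hfw]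
              subst this
              exfalso
              rw [SimpleGraph.Walk.isPath_def] at hpt
              simp [SimpleGraph.Walk.support_cons] at hpt
          have hq0 := hq'nil z h q' hdq hq Sxz
          have hr0 := hq'nil z' h' r' hdr hr Sxz'
          cases q' with
          | cons _ _ => simp [SimpleGraph.Walk.length_cons] at hq0
          | nil =>
            cases r' with
            | cons _ _ => simp [SimpleGraph.Walk.length_cons] at hr0
            | nil => rfl
        · -- x is a leaf: next vertex must be the center f x
          have hz : z = f x := by
            have h1 := hS _ _ Sxz
            rcases h1.2 with hh | hh
            · exact absurd hh hx
            · rw [← hh, h1.1]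
          have hz' : z' = f x := by
            have h1 := hS _ _ Sxz'
            rcases h1.2 with hh | hh
            · exact absurd hh hx
            · rw [← hh, h1.1]
          subst hz
          have : z' = f x := hz'
          subst this
          have : q' = r' := by
            refine ih q' r' ?_ hq.of_cons hr.of_cons (hdq.of_cons S) (hdr.of_cons S)
            have := hl
            simp [SimpleGraph.Walk.length_cons] at this
            omega
          rw [this]
  end Star


open SimpleGraph

variable {c : ℕ}

lemma incr_tail {V : Type*} {G : SimpleGraph V} {lb : Sym2 V → ℝ} {x z y : V}
    {h : G.Adj x z} {t : G.Walk z y} (hp : IsIncreasing G lb (Walk.cons h t)) :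
    IsIncreasing G lb t := by
  rw [IsIncreasing] at hp ⊢
  simp only [Walk.edges_cons, List.map_cons] at hp
  exact hp.tail

lemma incr_head2 {V : Type*} {G : SimpleGraph V} {lb : Sym2 V → ℝ} {x z z2 y : V}
    {h : G.Adj x z} {h2 : G.Adj z z2} {t : G.Walk z2 y}
    (hp : IsIncreasing G lb (Walk.cons h (Walk.cons h2 t))) : lb s(x, z) ≤ lb s(z, z2) := by
  rw [IsIncreasing] at hp
  simp only [Walk.edges_cons, List.map_cons] at hp
  exact (List.isChain_cons_cons.mp hp).1

lemma dec (hc : 3 ≤ c) {x y : FVert c} (p : (FGadget c).Walk x y)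
    (hp : IsIncreasing (FGadget c) (lab c) p) :
    ∃ (u w : FVert c) (q1 : (FGadget c).Walk x u) (qm : (FGadget c).Walk u w)
      (qc : (FGadget c).Walk w y),
      p = q1.append (qm.append qc) ∧ DW (C1 c) q1 ∧ DW (CM c) qm ∧ DW (CC c) qc := by
  have hc3 : (3 : ℝ) ≤ (c : ℝ) := by exact_mod_cast hc
  induction p with
  | nil => exact ⟨_, _, Walk.nil, Walk.nil, Walk.nil, rfl, DW.nil _, DW.nil _, DW.nil _⟩
  | cons h p' ih =>
    rename_i x' z' y'
    obtain ⟨u, w, q1, qm, qc, hpe, h1, hm, hcc⟩ := ih (incr_tail hp)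
    rcases edge_cases hc h with hC | hC | hC
    · refine ⟨u, w, Walk.cons h q1, qm, qc, ?_, DW.cons _ hC h1, hm, hcc⟩
      rw [hpe, Walk.cons_append]
    · -- middle edge
      cases q1 with
      | cons h1' t =>
        exfalso
        rw [hpe, Walk.cons_append] at hp
        have hle := incr_head2 hp
        have := (h1.head _).1
        have h2 := hC.2.2.2.1
        rw [this] at hle
        linarith
      | nil =>
        cases qm with
        | cons hm' t =>
          refine ⟨_, w, Walk.nil, Walk.cons h (Walk.cons hm' t), qc, ?_,
            DW.nil _, DW.cons _ hC hm, hcc⟩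
          rw [hpe]
          simp [Walk.nil_append, Walk.cons_append]
        | nil =>
          refine ⟨_, _, Walk.nil, Walk.cons h Walk.nil, qc, ?_, DW.nil _, ?_, hcc⟩
          · rw [hpe]; simp [Walk.nil_append, Walk.cons_append]
          · exact DW.cons _ hC (DW.nil _)
    · -- c edge: q1 and qm must be nil
      cases q1 with
      | cons h1' t =>
        exfalso
        rw [hpe, Walk.cons_append] at hp
        have hle := incr_head2 hp
        have := (h1.head _).1
        have h2 := hC.1
        rw [this] at hle
        rw [h2] at hle
        linarith
      | nil =>
        cases qm with
        | cons hm' t =>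
          exfalso
          rw [hpe, Walk.nil_append, Walk.cons_append] at hp
          have hle := incr_head2 hp
          have h4 := (hm.head _).2.2.2.2
          have h2 := hC.1
          rw [h2] at hle
          linarith
        | nil =>
          refine ⟨_, _, Walk.nil, Walk.nil, Walk.cons h qc, ?_, DW.nil _, DW.nil _, ?_⟩
          · rw [hpe]; simp [Walk.nil_append, Walk.cons_append]
          · exact DW.cons _ hC hcc

lemma C1_f : ∀ z z' : FVert c, C1 c z z' → c1f z = c1f z' ∧ (c1f z = z ∨ c1f z' = z') :=
  fun _ _ h => ⟨h.2.1, h.2.2⟩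

lemma CC_f : ∀ z z' : FVert c, CC c z z' → ccf z = ccf z' ∧ (ccf z = z ∨ ccf z' = z') :=
  fun _ _ h => ⟨h.2.1, h.2.2⟩

lemma CM_f : ∀ z z' : FVert c, CM c z z' →
    (fun _ : FVert c => (vv : FVert c)) z = (fun _ : FVert c => (vv : FVert c)) z' ∧
    ((fun _ : FVert c => (vv : FVert c)) z = z ∨ (fun _ : FVert c => (vv : FVert c)) z' = z') :=
  fun _ _ h => ⟨rfl, h.1.imp Eq.symm Eq.symm⟩

lemma midV_fix {z : FVert c} (h : midV z) : c1f z = z ∧ ccf z = z := by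
  rcases h with rfl | ⟨i, hi, rfl⟩
  · exact ⟨rfl, rfl⟩
  · constructor <;> simp [c1f, ccf, bi, hi]

lemma cons_path_end_ne {V : Type*} {G : SimpleGraph V} {x z y : V} (h : G.Adj x z)
    (t : G.Walk z y) (hp : (Walk.cons h t).IsPath) : x ≠ y := by
  rintro rfl
  have := Walk.isPath_iff_eq_nil.mp hp
  simp at this

lemma mid_end' : ∀ {z w : FVert c} (q : (FGadget c).Walk z w), DW (CM c) q → midV z → midV w := by
  intro z w q
  induction q with
  | nil => exact fun _ h => h
  | cons h t ih => exact fun hd _ => ih (hd.of_cons _) ((hd.head _).2.2.1)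

lemma pairA1 {w : FVert c} {j : Fin (c - 1)} (h1 : c1f w = (vv : FVert c))
    (h2 : ccf w = bi j) : j.val = 0 := by
  rcases w with ⟨⟩ | k | p | ⟨x, t⟩
  · exfalso; simp [ccf, vv, bi] at h2
  · simp only [c1f] at h1
    split at h1
    · simp only [ccf, bi, Sum.inr.injEq, Sum.inl.injEq] at h2
      subst h2; assumption
    · exfalso; simp [bi, vv] at h1
  · exfalso; simp [c1f, bi, vv] at h1
  · exfalso
    fin_cases t
    · simp [c1f, vv, mx] at h1
    · simp [ccf, bi, mx] at h2
    · simp [c1f, vv, mx] at h1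
    · simp [c1f, vv, bi] at h1
    · simp [c1f, vv, mx] at h1

lemma pairA2 {w : FVert c} {i : Fin (c - 1)} (h1 : c1f w = (bi i : FVert c))
    (h2 : ccf w = vv) : False := by
  rcases w with ⟨⟩ | k | p | ⟨x, t⟩
  · simp [c1f, bi, vv] at h1
  · simp [ccf, bi, vv] at h2
  · simp [ccf, bi, vv] at h2
  · fin_cases t
    · simp [ccf, vv, mx] at h2
    · simp [ccf, vv, mx] at h2
    · simp [c1f, bi, mx] at h1
    · simp [ccf, vv, bi, mx] at h2
    · simp [c1f, bi, mx] at h1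

lemma pairA3 {w : FVert c} {i j : Fin (c - 1)} (h1 : c1f w = (bi i : FVert c))
    (h2 : ccf w = bi j) : i = j ∨ j.val < i.val := by
  rcases w with ⟨⟩ | k | p | ⟨x, t⟩
  · exact absurd h1 (by simp [c1f, bi, vv])
  · simp only [c1f] at h1
    split at h1
    · exact absurd h1 (by simp [bi, vv])
    · simp only [bi, Sum.inr.injEq, Sum.inl.injEq] at h1
      simp only [ccf, bi, Sum.inr.injEq, Sum.inl.injEq] at h2
      left; rw [← h1, ← h2]
  · simp only [c1f, ccf, bi, Sum.inr.injEq, Sum.inl.injEq] at h1 h2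
    right
    rw [← h1, ← h2]
    exact p.property
  · exfalso
    fin_cases t
    · simp [c1f, bi, mx] at h1
    · simp [c1f, bi, vv] at h1
    · simp [c1f, bi, mx] at h1
    · simp [ccf, bi, mx] at h2
    · simp [c1f, bi, mx] at h1

lemma inj_pair (z z' : FVert c) (h1 : c1f z = c1f z') (h2 : ccf z = ccf z') : z = z' := by
  rcases z with ⟨⟩ | i | p | ⟨x, t⟩ <;> rcases z' with ⟨⟩ | i' | p' | ⟨x', t'⟩
  · rfl
  · exact absurd h2 (by simp [ccf, vv, bi])
  · exact absurd h2 (by simp [ccf, vv, bi])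
  · exfalso; fin_cases t' <;> simp_all [c1f, ccf, vv, bi, mx]
  · exact absurd h2 (by simp [ccf, vv, bi])
  · simp only [ccf, bi, Sum.inr.injEq, Sum.inl.injEq] at h2
    rw [h2]
  · exfalso
    simp only [ccf, bi, Sum.inr.injEq, Sum.inl.injEq] at h2
    simp only [c1f] at h1
    split at h1
    · simp [vv, bi] at h1
    · simp only [bi, Sum.inr.injEq, Sum.inl.injEq] at h1
      have hp := p'.property
      rw [← h1, ← h2] at hp
      exact lt_irrefl _ hp
  · exfalso
    fin_cases t'
    · simp only [c1f] at h1
      split at h1 <;> simp [vv, bi, mx] at h1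
    · simp [ccf, bi, mx] at h2
    · simp only [c1f] at h1
      split at h1 <;> simp [vv, bi, mx] at h1
    · simp [ccf, bi, mx] at h2
    · simp only [c1f] at h1
      split at h1 <;> simp [vv, bi, mx] at h1
  · exact absurd h2 (by simp [ccf, vv, bi])
  · exfalso
    simp only [ccf, bi, Sum.inr.injEq, Sum.inl.injEq] at h2
    simp only [c1f] at h1
    split at h1
    · simp [vv, bi] at h1
    · simp only [bi, Sum.inr.injEq, Sum.inl.injEq] at h1
      have hp := p.property
      rw [h1, h2] at hp
      exact lt_irrefl _ hp
  · simp only [c1f, ccf, bi, Sum.inr.injEq, Sum.inl.injEq] at h1 h2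
    have : p.val = p'.val := Prod.ext h2 h1
    exact congrArg (fun q => Sum.inr (Sum.inr (Sum.inl q))) (Subtype.ext this)
  · exfalso
    fin_cases t'
    · simp [c1f, bi, mx] at h1
    · simp [c1f, bi, vv] at h1
    · simp [c1f, bi, mx] at h1
    · simp [ccf, bi, mx] at h2
    · simp [c1f, bi, mx] at h1
  · exfalso; fin_cases t <;> simp_all [c1f, ccf, vv, bi, mx]
  · exfalso
    fin_cases t
    · simp [ccf, mx, bi] at h2
    · simp [ccf, mx, bi] at h2
    · simp [ccf, vv, bi] at h2
    · simp [ccf, mx, bi] at h2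
    · simp [c1f, mx] at h1
      split_ifs at h1 <;> simp [vv, bi, mx] at h1
  · exfalso
    fin_cases t
    · simp [c1f, bi, mx] at h1
    · simp [c1f, bi, vv] at h1
    · simp [c1f, bi, mx] at h1
    · simp [ccf, bi, mx] at h2
    · simp [c1f, bi, mx] at h1
  · fin_cases t <;> fin_cases t' <;> simp_all [c1f, ccf, vv, bi, mx]

lemma mid_structure {i j : Fin (c - 1)} {z : FVert c} (h : (FGadget c).Adj (bi i) z)
    (q : (FGadget c).Walk z (bi j)) (hpath : (Walk.cons h q).IsPath)
    (hd : DW (CM c) (Walk.cons h q)) :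
    (Walk.cons h q).edges = [s((bi i : FVert c), vv), s((vv : FVert c), bi j)] ∧ i ≠ j := by
  have hz : z = vv := by
    rcases (hd.head _).1 with h' | h'
    · exact absurd h' (by simp [bi, vv])
    · exact h'
  subst hz
  cases q with
  | cons h2 t =>
    rename_i z2
    have hz2 : ∃ k : Fin (c - 1), k.val ≠ 0 ∧ z2 = bi k := by
      rcases ((hd.of_cons _).head _).2.2.1 with h' | h'
      · exact absurd h'.symm ((FGadget c).ne_of_adj h2)
      · exact h'
    obtain ⟨k, hk, rfl⟩ := hz2
    cases t with
    | nil =>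
      constructor
      · simp [Walk.edges_cons]
      · rintro rfl
        rw [Walk.isPath_def] at hpath
        simp [Walk.support_cons] at hpath
    | cons h3 t2 =>
      rename_i z3
      exfalso
      have hz3 : z3 = vv := by
        rcases (((hd.of_cons _).of_cons _).head _).1 with h' | h'
        · exact absurd h' (by simp [bi, vv])
        · exact h'
      subst hz3
      rw [Walk.isPath_def] at hpath
      simp [Walk.support_cons] at hpath

lemma mid_le (p1e pce : List (Sym2 (FVert c))) (e1 e2 : Sym2 (FVert c))
    (h : ((p1e ++ ([e1, e2] ++ pce)).map (lab c)).Chain' (· ≤ ·)) :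
    lab c e1 ≤ lab c e2 := by
  have hinf : [lab c e1, lab c e2] <:+: ((p1e ++ ([e1, e2] ++ pce)).map (lab c)) :=
    ⟨p1e.map (lab c), pce.map (lab c), by simp⟩
  exact (List.isChain_cons_cons.mp (h.infix hinf)).1

lemma no_mixed (hc : 3 ≤ c) {x y u w z w'' : FVert c}
    (p1 : (FGadget c).Walk x u) (h : (FGadget c).Adj u z) (pm' : (FGadget c).Walk z w)
    (pc : (FGadget c).Walk w y)
    (hP1 : DW (C1 c) p1) (hPm : DW (CM c) (Walk.cons h pm')) (hPc : DW (CC c) pc)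
    (hp : (p1.append ((Walk.cons h pm').append pc)).IsPath)
    (hip : IsIncreasing (FGadget c) (lab c) (p1.append ((Walk.cons h pm').append pc)))
    (hw1 : c1f w'' = c1f x) (hw2 : ccf w'' = ccf y) : False := by
  have hmidu : midV u := (hPm.head _).2.1
  have hmidw : midV w := mid_end' _ hPm hmidu
  have hu : u = c1f x := by
    have h1 := dw_const _ c1f C1_f p1 hP1
    have h2 := (midV_fix hmidu).1
    exact h2.symm.trans h1.symm
  have hw : w = ccf y := by
    have h1 := dw_const _ ccf CC_f pc hPc
    have h2 := (midV_fix hmidw).2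
    exact h2.symm.trans h1
  rcases hmidu with hu0 | ⟨i, hi, hu0⟩
  · rcases hmidw with hw0 | ⟨j, hj, hw0⟩
    · have hne : u ≠ w := cons_path_end_ne h pm' ((hp.of_append_right).of_append_left)
      exact hne (hu0.trans hw0.symm)
    · exact hj (pairA1 (hw1.trans (hu.symm.trans hu0))
        (hw2.trans (hw.symm.trans hw0)))
  · rcases hmidw with hw0 | ⟨j, hj, hw0⟩
    · exact pairA2 (hw1.trans (hu.symm.trans hu0)) (hw2.trans (hw.symm.trans hw0))
    · subst hu0
      subst hw0
      obtain ⟨hedges, hneij⟩ := mid_structure h pm'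
        ((hp.of_append_right).of_append_left) hPm
      rw [IsIncreasing, Walk.edges_append, Walk.edges_append, hedges] at hip
      have hle := mid_le _ _ _ _ hip
      have l1 : lab c s((bi i : FVert c), vv) = (i.val : ℝ) + 1 := by
        simp [labf, bi, vv]
      have l2 : lab c s((vv : FVert c), bi j) = (j.val : ℝ) + 1 := by
        simp [labf, bi, vv]
      rw [l1, l2] at hle
      have hij : i.val ≤ j.val := by
        have : (i.val : ℝ) ≤ (j.val : ℝ) := by linarith
        exact_mod_cast this
      rcases pairA3 (hw1.trans (hu.symm.trans rfl)) (hw2.trans hw.symm) with h' | h'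
      · exact hneij h'
      · omega

theorem good_lab (hc : 3 ≤ c) : IsGoodLabeling (FGadget c) (lab c) := by
  intro x y p q hp hq hip hiq
  obtain ⟨u, w, p1, pm, pc, hpe, hP1, hPm, hPc⟩ := dec hc p hip
  obtain ⟨u', w', q1, qm, qc, hqe, hQ1, hQm, hQc⟩ := dec hc q hiq
  subst hpe
  subst hqe
  have hP1p : p1.IsPath := hp.of_append_left
  have hPcp : pc.IsPath := (hp.of_append_right).of_append_right
  have hQ1p : q1.IsPath := hq.of_append_left
  have hQcp : qc.IsPath := (hq.of_append_right).of_append_right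
  have hxu : c1f x = c1f u := dw_const _ c1f C1_f p1 hP1
  have hwy : ccf w = ccf y := dw_const _ ccf CC_f pc hPc
  have hxu' : c1f x = c1f u' := dw_const _ c1f C1_f q1 hQ1
  have hwy' : ccf w' = ccf y := dw_const _ ccf CC_f qc hQc
  cases pm with
  | nil =>
    cases qm with
    | nil =>
      have huu' : u = u' := inj_pair _ _ (hxu.symm.trans hxu') (hwy.trans hwy'.symm)
      subst huu'
      have e1 : p1 = q1 :=
        star_uniq _ c1f C1_f p1.length p1 q1 le_rfl hP1p hQ1p hP1 hQ1
      have e3 : pc = qc :=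
        star_uniq _ ccf CC_f pc.length pc qc le_rfl hPcp hQcp hPc hQc
      rw [e1, e3]
    | cons hqm qm' =>
      exact (no_mixed hc q1 hqm qm' qc hQ1 hQm hQc hq hiq hxu.symm hwy).elim
  | cons hpm pm' =>
    cases qm with
    | nil =>
      exact (no_mixed hc p1 hpm pm' pc hP1 hPm hPc hp hip hxu'.symm hwy').elim
    | cons hqm qm' =>
      have hmu : midV u := (hPm.head _).2.1
      have hmu' : midV u' := (hQm.head _).2.1
      have hmw : midV w := mid_end' _ hPm hmu
      have hmw' : midV w' := mid_end' _ hQm hmu'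
      have h1 : u = u' := (midV_fix hmu).1.symm.trans
        (((hxu.symm.trans hxu')).trans (midV_fix hmu').1)
      subst h1
      have h2 : w = w' := (midV_fix hmw).2.symm.trans
        ((hwy.trans hwy'.symm).trans (midV_fix hmw').2)
      subst h2
      have hPmp : (Walk.cons hpm pm').IsPath := (hp.of_append_right).of_append_left
      have hQmp : (Walk.cons hqm qm').IsPath := (hq.of_append_right).of_append_left
      have e1 : p1 = q1 :=
        star_uniq _ c1f C1_f p1.length p1 q1 le_rfl hP1p hQ1p hP1 hQ1
      have e2 : Walk.cons hpm pm' = Walk.cons hqm qm' :=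
        star_uniq _ (fun _ => vv) CM_f _ _ _ le_rfl hPmp hQmp hPm hQm
      have e3 : pc = qc :=
        star_uniq _ ccf CC_f pc.length pc qc le_rfl hPcp hQcp hPc hQc
      rw [e1, e2, e3]

/-! ### Cardinality bound -/

lemma lab_nat (hc : 3 ≤ c) {z z' : FVert c} (h : (FGadget c).Adj z z') :
    ∃ k : ℕ, 1 ≤ k ∧ k ≤ c ∧ lab c s(z, z') = (k : ℝ) := by
  have key : ∀ z z' : FVert c,
      ((∃ i : Fin (c - 1), z = Sum.inl () ∧ z' = Sum.inr (Sum.inl i)) ∨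
      (∃ (i : Fin (c - 1)) (p : {p : Fin (c - 1) × Fin (c - 1) // p.1 < p.2}),
        z = Sum.inr (Sum.inl i) ∧ z' = Sum.inr (Sum.inr (Sum.inl p)) ∧
        (p.val.1 = i ∨ p.val.2 = i)) ∨
      (∃ (x : {i : Fin (c - 1) // i.val ≠ 0}) (t : Fin 5), t ≠ 0 ∧
        z = Sum.inr (Sum.inr (Sum.inr (x, 0))) ∧ z' = Sum.inr (Sum.inr (Sum.inr (x, t)))) ∨
      (∃ (x : {i : Fin (c - 1) // i.val ≠ 0}) (t : Fin 5), (t = 1 ∨ t = 2) ∧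
        z = Sum.inr (Sum.inr (Sum.inr (x, t))) ∧ z' = Sum.inl ()) ∨
      (∃ (x : {i : Fin (c - 1) // i.val ≠ 0}) (t : Fin 5), (t = 3 ∨ t = 4) ∧
        z = Sum.inr (Sum.inr (Sum.inr (x, t))) ∧ z' = Sum.inr (Sum.inl x.val))) →
      ∃ k : ℕ, 1 ≤ k ∧ k ≤ c ∧ lab c s(z, z') = (k : ℝ) := by
    intro z z' h
    obtain (⟨i, rfl, rfl⟩ | ⟨i, p, rfl, rfl, hp⟩ | ⟨x, t, ht, rfl, rfl⟩ |
        ⟨x, t, ht, rfl, rfl⟩ | ⟨x, t, ht, rfl, rfl⟩) := h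
    · refine ⟨i.val + 1, by omega, by have := i.isLt; omega, ?_⟩
      simp [labf]
    · rcases hp with hp | hp
      · exact ⟨c, by omega, le_rfl, by simp [labf, hp]⟩
      · have hne1 : p.val.1 ≠ i := by
          have := p.property; rw [← hp]; exact Fin.ne_of_lt this
        exact ⟨1, le_rfl, by omega, by simp [labf, hne1]⟩
    · fin_cases t
      · exact absurd rfl ht
      · exact ⟨c, by omega, le_rfl, by simp [labf]⟩
      · exact ⟨1, le_rfl, by omega, by simp [labf]⟩
      · exact ⟨c, by omega, le_rfl, by simp [labf]⟩
      · exact ⟨1, le_rfl, by omega, by simp [labf]⟩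
    · rcases ht with rfl | rfl
      · exact ⟨1, le_rfl, by omega, by simp [labf]⟩
      · exact ⟨c, by omega, le_rfl, by simp [labf]⟩
    · rcases ht with rfl | rfl
      · exact ⟨1, le_rfl, by omega, by simp [labf]⟩
      · exact ⟨c, by omega, le_rfl, by simp [labf]⟩
  rw [FGadget, SimpleGraph.fromRel_adj] at h
  obtain ⟨hne, h | h⟩ := h
  · exact key _ _ h
  · obtain ⟨k, h1, h2, h3⟩ := key _ _ h
    exact ⟨k, h1, h2, by rwa [Sym2.eq_swap]⟩

lemma card_bound (hc : 3 ≤ c) : (lab c '' (FGadget c).edgeSet).ncard ≤ c := by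
  have hsub : lab c '' (FGadget c).edgeSet ⊆ (fun k : ℕ => (k : ℝ)) '' (Set.Icc 1 c) := by
    rintro r ⟨e, he, rfl⟩
    induction e with
    | _ z z' =>
      rw [SimpleGraph.mem_edgeSet] at he
      obtain ⟨k, h1, h2, h3⟩ := lab_nat hc he
      exact ⟨k, Set.mem_Icc.mpr ⟨h1, h2⟩, h3.symm⟩
  have hfin : ((fun k : ℕ => (k : ℝ)) '' (Set.Icc 1 c)).Finite :=
    (Set.finite_Icc _ _).image _
  calc (lab c '' (FGadget c).edgeSet).ncard
      ≤ ((fun k : ℕ => (k : ℝ)) '' (Set.Icc 1 c)).ncard := Set.ncard_le_ncard hsub hfin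
    _ ≤ (Set.Icc 1 c).ncard := Set.ncard_image_le (Set.finite_Icc _ _)
    _ ≤ c := by rw [← Finset.coe_Icc, Set.ncard_coe_finset, Nat.card_Icc]; omega

/-! ### Part 2: adjacency helpers -/

lemma adj_v_bi (i : Fin (c - 1)) : (FGadget c).Adj vv (bi i) := by
  rw [FGadget, SimpleGraph.fromRel_adj]
  exact ⟨by simp [vv, bi], Or.inl (Or.inl ⟨i, rfl, rfl⟩)⟩

lemma adj_bi_gi (i : Fin (c - 1)) (p : Pr c) (h : p.val.1 = i ∨ p.val.2 = i) :
    (FGadget c).Adj (bi i) (gi p) := by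
  rw [FGadget, SimpleGraph.fromRel_adj]
  exact ⟨by simp [gi, bi], Or.inl (Or.inr (Or.inl ⟨i, p, rfl, rfl, h⟩))⟩

lemma adj_mx0 (x : Xi c) (t : Fin 5) (ht : t ≠ 0) : (FGadget c).Adj (mx x 0) (mx x t) := by
  rw [FGadget, SimpleGraph.fromRel_adj]
  refine ⟨by simp [mx, ht.symm], Or.inl (Or.inr (Or.inr (Or.inl ⟨x, t, ht, rfl, rfl⟩)))⟩

lemma adj_m_v (x : Xi c) (t : Fin 5) (ht : t = 1 ∨ t = 2) : (FGadget c).Adj (mx x t) vv := by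
  rw [FGadget, SimpleGraph.fromRel_adj]
  exact ⟨by simp [mx, vv], Or.inl (Or.inr (Or.inr (Or.inr (Or.inl ⟨x, t, ht, rfl, rfl⟩))))⟩

lemma adj_m_b (x : Xi c) (t : Fin 5) (ht : t = 3 ∨ t = 4) :
    (FGadget c).Adj (mx x t) (bi x.val) := by
  rw [FGadget, SimpleGraph.fromRel_adj]
  exact ⟨by simp [mx, bi], Or.inl (Or.inr (Or.inr (Or.inr (Or.inr ⟨x, t, ht, rfl, rfl⟩))))⟩

lemma swap_lb (lb : Sym2 (FVert c) → ℝ) (a b : FVert c) : lb s(a, b) = lb s(b, a) := by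
  rw [Sym2.eq_swap]

/-- two increasing 2-paths through distinct middle vertices give a contradiction -/
lemma two_paths (lb : Sym2 (FVert c) → ℝ) (hgood : IsGoodLabeling (FGadget c) lb)
    {a b m m' : FVert c} (h1 : (FGadget c).Adj a m) (h2 : (FGadget c).Adj m b)
    (h3 : (FGadget c).Adj a m') (h4 : (FGadget c).Adj m' b)
    (hmm : m ≠ m') (hab : a ≠ b) (ham : a ≠ m') (hbm : b ≠ m)
    (hle1 : lb s(a, m) ≤ lb s(m, b)) (hle2 : lb s(a, m') ≤ lb s(m', b)) : False := by
  have hP : ((Walk.cons h1 (Walk.cons h2 Walk.nil)) : (FGadget c).Walk a b).IsPath := by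
    rw [Walk.isPath_def]
    simp [Walk.support_cons]
    exact ⟨⟨(h1.ne), hab⟩, hbm.symm⟩
  have hQ : ((Walk.cons h3 (Walk.cons h4 Walk.nil)) : (FGadget c).Walk a b).IsPath := by
    rw [Walk.isPath_def]
    simp [Walk.support_cons]
    exact ⟨⟨ham, hab⟩, (h4.ne)⟩
  have hiP : IsIncreasing (FGadget c) lb (Walk.cons h1 (Walk.cons h2 Walk.nil)) := by
    rw [IsIncreasing]
    simp [Walk.edges_cons, List.isChain_cons_cons]
    exact List.isChain_pair.mpr hle1
  have hiQ : IsIncreasing (FGadget c) lb (Walk.cons h3 (Walk.cons h4 Walk.nil)) := by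
    rw [IsIncreasing]
    simp [Walk.edges_cons, List.isChain_cons_cons]
    exact List.isChain_pair.mpr hle2
  have := hgood a b _ _ hP hQ hiP hiQ
  have := congrArg SimpleGraph.Walk.support this
  simp [Walk.support_cons] at this
  exact hmm this

/-- an increasing 2-path and an increasing 3-path between the same endpoints
give a contradiction -/
lemma two_three_paths (lb : Sym2 (FVert c) → ℝ) (hgood : IsGoodLabeling (FGadget c) lb)
    {a b m m' m'' : FVert c} (h1 : (FGadget c).Adj a m) (h2 : (FGadget c).Adj m b)
    (h3 : (FGadget c).Adj a m') (h4 : (FGadget c).Adj m' m'') (h5 : (FGadget c).Adj m'' b)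
    (hab : a ≠ b) (hbm : b ≠ m)
    (ham' : a ≠ m') (ham'' : a ≠ m'') (hbm' : b ≠ m') (hmm : m' ≠ m'')
    (hle1 : lb s(a, m) ≤ lb s(m, b))
    (hle2 : lb s(a, m') ≤ lb s(m', m'')) (hle3 : lb s(m', m'') ≤ lb s(m'', b)) : False := by
  have hP : ((Walk.cons h1 (Walk.cons h2 Walk.nil)) : (FGadget c).Walk a b).IsPath := by
    rw [Walk.isPath_def]
    simp [Walk.support_cons]
    exact ⟨⟨(h1.ne), hab⟩, hbm.symm⟩
  have hQ : ((Walk.cons h3 (Walk.cons h4 (Walk.cons h5 Walk.nil))) :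
      (FGadget c).Walk a b).IsPath := by
    rw [Walk.isPath_def]
    simp [Walk.support_cons]
    exact ⟨⟨ham', ham'', hab⟩, ⟨hmm, hbm'.symm⟩, h5.ne⟩
  have hiP : IsIncreasing (FGadget c) lb (Walk.cons h1 (Walk.cons h2 Walk.nil)) := by
    rw [IsIncreasing]
    simp [Walk.edges_cons, List.isChain_cons_cons]
    exact List.isChain_pair.mpr hle1
  have hiQ : IsIncreasing (FGadget c) lb
      (Walk.cons h3 (Walk.cons h4 (Walk.cons h5 Walk.nil))) := by
    rw [IsIncreasing]
    simp [Walk.edges_cons, List.isChain_cons_cons]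
    exact List.isChain_cons_cons.mpr ⟨hle2, List.isChain_pair.mpr hle3⟩
  have := hgood a b _ _ hP hQ hiP hiQ
  have := congrArg SimpleGraph.Walk.length this
  simp [Walk.length_cons] at this

lemma part2 (hc : 3 ≤ c) (lb : Sym2 (FVert c) → ℝ)
    (hlab : ∀ e ∈ (FGadget c).edgeSet, ∃ k : ℕ, 1 ≤ k ∧ k ≤ c ∧ lb e = (k : ℝ))
    (hgood : IsGoodLabeling (FGadget c) lb) (i0 : Fin (c - 1)) (hi0 : i0.val = 0) :
    lb s(vv, bi i0) = 1 ∨ lb s(vv, bi i0) = (c : ℝ) := by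
  -- natural number labels on the star edges
  have hK : ∀ i : Fin (c - 1), ∃ k : ℕ, 1 ≤ k ∧ k ≤ c ∧ lb s(vv, bi i) = (k : ℝ) :=
    fun i => hlab _ ((FGadget c).mem_edgeSet.mpr (adj_v_bi i))
  -- distinctness of star labels
  have hlt : ∀ i j : Fin (c - 1), i < j → lb s(vv, bi i) ≠ lb s(vv, bi j) := by
    intro i j hij heq
    set p : Pr c := ⟨(i, j), hij⟩ with hp
    have hne_ij : (bi i : FVert c) ≠ bi j := by
      simp only [bi, ne_eq, Sum.inr.injEq, Sum.inl.injEq]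
      exact Fin.ne_of_lt hij
    rcases le_total (lb s(bi i, gi p)) (lb s(gi p, bi j)) with hle | hle
    · refine two_paths lb hgood ((adj_v_bi i).symm) (adj_v_bi j)
        (adj_bi_gi i p (Or.inl rfl)) ((adj_bi_gi j p (Or.inr rfl)).symm)
        (by simp [vv, gi]) hne_ij (by simp [bi, gi]) (by simp [bi, vv]) ?_ hle
      rw [← swap_lb lb vv (bi i), heq]
    · refine two_paths lb hgood ((adj_v_bi j).symm) (adj_v_bi i)
        ((adj_bi_gi j p (Or.inr rfl))) ((adj_bi_gi i p (Or.inl rfl)).symm)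
        (by simp [vv, gi]) hne_ij.symm (by simp [bi, gi]) (by simp [bi, vv]) ?_ ?_
      · rw [← swap_lb lb vv (bi j), ← heq]
      · rwa [swap_lb lb (bi j) (gi p), swap_lb lb (gi p) (bi i)]
  have hdist : ∀ i j : Fin (c - 1), i ≠ j → lb s(vv, bi i) ≠ lb s(vv, bi j) := by
    intro i j hij
    rcases lt_trichotomy i j with h | h | h
    · exact hlt i j h
    · exact absurd h hij
    · exact fun he => hlt j i h he.symm
  -- the extremal gadgets force interior values
  have hext : ∀ i : Fin (c - 1), i.val ≠ 0 →
      lb s(vv, bi i) ≠ 1 ∧ lb s(vv, bi i) ≠ (c : ℝ) := by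
    intro i hi
    set x : Xi c := ⟨i, hi⟩ with hx
    have hxval : (x : Xi c).val = i := rfl
    -- goodness on the four pairs of 2-paths in the gadget
    have h1 : ¬(lb s(mx x 0, mx x 1) ≤ lb s(mx x 1, vv) ∧
        lb s(mx x 0, mx x 2) ≤ lb s(mx x 2, vv)) := by
      rintro ⟨ha, hb⟩
      exact two_paths lb hgood (adj_mx0 x 1 (by decide)) (adj_m_v x 1 (Or.inl rfl))
        (adj_mx0 x 2 (by decide)) (adj_m_v x 2 (Or.inr rfl))
        (by simp [mx]) (by simp [mx, vv]) (by simp [mx]) (by simp [mx, vv]) ha hb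
    have h2 : ¬(lb s(vv, mx x 1) ≤ lb s(mx x 1, mx x 0) ∧
        lb s(vv, mx x 2) ≤ lb s(mx x 2, mx x 0)) := by
      rintro ⟨ha, hb⟩
      exact two_paths lb hgood ((adj_m_v x 1 (Or.inl rfl)).symm) ((adj_mx0 x 1 (by decide)).symm)
        ((adj_m_v x 2 (Or.inr rfl)).symm) ((adj_mx0 x 2 (by decide)).symm)
        (by simp [mx]) (by simp [mx, vv]) (by simp [mx, vv]) (by simp [mx]) ha hb
    have h3 : ¬(lb s(mx x 0, mx x 3) ≤ lb s(mx x 3, bi i) ∧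
        lb s(mx x 0, mx x 4) ≤ lb s(mx x 4, bi i)) := by
      rintro ⟨ha, hb⟩
      refine two_paths lb hgood (adj_mx0 x 3 (by decide)) (adj_m_b x 3 (Or.inl rfl))
        (adj_mx0 x 4 (by decide)) (adj_m_b x 4 (Or.inr rfl))
        (by simp [mx]) (by simp [mx, bi]) (by simp [mx]) (by simp [mx, bi]) ha hb
    have h4 : ¬(lb s(bi i, mx x 3) ≤ lb s(mx x 3, mx x 0) ∧
        lb s(bi i, mx x 4) ≤ lb s(mx x 4, mx x 0)) := by
      rintro ⟨ha, hb⟩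
      refine two_paths lb hgood ((adj_m_b x 3 (Or.inl rfl)).symm) ((adj_mx0 x 3 (by decide)).symm)
        ((adj_m_b x 4 (Or.inr rfl)).symm) ((adj_mx0 x 4 (by decide)).symm)
        (by simp [mx]) (by simp [mx, bi]) (by simp [mx, bi]) (by simp [mx]) ha hb
    constructor
    · -- bone ≠ 1
      intro hb1
      rw [not_and_or, not_le, not_le] at h1 h3
      obtain ⟨tm, htm, hm⟩ : ∃ t : Fin 5, (t = 1 ∨ t = 2) ∧
          lb s(mx x t, vv) < lb s(mx x 0, mx x t) := by
        rcases h1 with h | h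
        · exact ⟨1, Or.inl rfl, h⟩
        · exact ⟨2, Or.inr rfl, h⟩
      obtain ⟨tk, htk, hk⟩ : ∃ t : Fin 5, (t = 3 ∨ t = 4) ∧
          lb s(mx x t, bi i) < lb s(mx x 0, mx x t) := by
        rcases h3 with h | h
        · exact ⟨3, Or.inl rfl, h⟩
        · exact ⟨4, Or.inr rfl, h⟩
      have htm' : tm ≠ 0 := by rcases htm with rfl | rfl <;> decide
      have htk' : tk ≠ 0 := by rcases htk with rfl | rfl <;> decide
      refine two_three_paths lb hgood ((adj_m_v x tm htm).symm) ((adj_mx0 x tm htm').symm)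
        (adj_v_bi i) ((adj_m_b x tk htk).symm) ((adj_mx0 x tk htk').symm)
        (by simp [vv, mx]) ?_ (by simp [vv, bi]) (by simp [vv, mx]) (by simp [mx, bi])
        (by simp [bi, mx]) ?_ ?_ ?_
      · simp only [mx, ne_eq, Sum.inr.injEq, Prod.mk.injEq, not_and]
        exact fun _ => htm'.symm
      · rw [swap_lb lb vv (mx x tm), swap_lb lb (mx x tm) (mx x 0)]
        exact hm.le
      · rw [hb1, swap_lb lb (bi i) (mx x tk)]
        obtain ⟨k', hk1, _, heq⟩ := hlab s(mx x tk, bi i)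
          ((FGadget c).mem_edgeSet.mpr (adj_m_b x tk htk))
        rw [heq]
        exact_mod_cast hk1
      · rw [swap_lb lb (bi i) (mx x tk), swap_lb lb (mx x tk) (mx x 0)]
        exact hk.le
    · -- bone ≠ c
      intro hbc
      rw [not_and_or, not_le, not_le] at h2 h4
      obtain ⟨tm, htm, hm⟩ : ∃ t : Fin 5, (t = 1 ∨ t = 2) ∧
          lb s(mx x t, mx x 0) < lb s(vv, mx x t) := by
        rcases h2 with h | h
        · exact ⟨1, Or.inl rfl, h⟩
        · exact ⟨2, Or.inr rfl, h⟩
      obtain ⟨tk, htk, hk⟩ : ∃ t : Fin 5, (t = 3 ∨ t = 4) ∧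
          lb s(mx x t, mx x 0) < lb s(bi i, mx x t) := by
        rcases h4 with h | h
        · exact ⟨3, Or.inl rfl, h⟩
        · exact ⟨4, Or.inr rfl, h⟩
      have htm' : tm ≠ 0 := by rcases htm with rfl | rfl <;> decide
      have htk' : tk ≠ 0 := by rcases htk with rfl | rfl <;> decide
      refine two_three_paths lb hgood (adj_mx0 x tm htm') (adj_m_v x tm htm)
        (adj_mx0 x tk htk') (adj_m_b x tk htk) ((adj_v_bi i).symm)
        (by simp [vv, mx]) (by simp [vv, mx]) ?_ (by simp [mx, bi]) (by simp [vv, mx])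
        (by simp [mx, bi]) ?_ ?_ ?_
      · simp only [mx, ne_eq, Sum.inr.injEq, Prod.mk.injEq, not_and]
        exact fun _ => htk'.symm
      · rw [swap_lb lb (mx x 0) (mx x tm), swap_lb lb (mx x tm) vv]
        exact hm.le
      · rw [swap_lb lb (mx x 0) (mx x tk), swap_lb lb (mx x tk) (bi i)]
        exact hk.le
      · rw [swap_lb lb (bi i) vv, hbc]
        obtain ⟨k', _, hkc, heq⟩ := hlab s(mx x tk, bi i)
          ((FGadget c).mem_edgeSet.mpr (adj_m_b x tk htk))
        rw [heq]
        exact_mod_cast hkc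
  -- pigeonhole
  by_contra hcon
  push_neg at hcon
  obtain ⟨hne1, hnec⟩ := hcon
  obtain ⟨k0, hk01, hk0c, hk0⟩ := hK i0
  have hk0ne1 : k0 ≠ 1 := by
    rintro rfl
    exact hne1 (by rw [hk0]; norm_num)
  have hk0nec : k0 ≠ c := by
    rintro rfl
    exact hnec hk0
  have hmem : ∀ i : Fin (c - 1), ∃ k : ℕ, 2 ≤ k ∧ k ≤ c - 1 ∧ lb s(vv, bi i) = (k : ℝ) := by
    intro i
    by_cases hi : i.val = 0
    · have hii : i = i0 := Fin.ext (by rw [hi, hi0])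
      exact ⟨k0, by omega, by omega, by rw [hii, hk0]⟩
    · obtain ⟨k, h1k, hkc, hkeq⟩ := hK i
      have hne := hext i hi
      have hk1 : k ≠ 1 := by
        rintro rfl
        exact hne.1 (by rw [hkeq]; norm_num)
      have hkc' : k ≠ c := by
        rintro rfl
        exact hne.2 hkeq
      exact ⟨k, by omega, by omega, hkeq⟩
  choose KK hKK1 hKK2 hKKeq using hmem
  have hKinj : Function.Injective KK := by
    intro i j hij
    by_contra hne
    exact hdist i j hne (by rw [hKKeq i, hKKeq j, hij])
  have hcard : Fintype.card (Fin (c - 1)) ≤ Fintype.card (Finset.Icc 2 (c - 1)) := by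
    refine Fintype.card_le_of_injective
      (fun i => (⟨KK i, Finset.mem_Icc.mpr ⟨hKK1 i, hKK2 i⟩⟩ : (Finset.Icc 2 (c - 1)))) ?_
    intro a b hab
    exact hKinj (congrArg Subtype.val hab)
  rw [Fintype.card_fin, Fintype.card_coe, Nat.card_Icc] at hcard
  omega

end FG

/-- For any `c ≥ 3`, the `c`-forced gadget `F_c` admits a `c`-gel, and for any good
edge-labeling of `F_c` with values in `{1, …, c}`, the label of the bone `v v_1` of `F_c`
is `1` or `c`. -/
theorem forced_gadget (c : ℕ) (hc : 3 ≤ c) :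
    (∃ lab : Sym2 (FVert c) → ℝ,
      IsGoodLabeling (FGadget c) lab ∧ (lab '' (FGadget c).edgeSet).ncard ≤ c) ∧
    (∀ lab : Sym2 (FVert c) → ℝ,
      (∀ e ∈ (FGadget c).edgeSet, ∃ k : ℕ, 1 ≤ k ∧ k ≤ c ∧ lab e = (k : ℝ)) →
      IsGoodLabeling (FGadget c) lab →
      lab s((Sum.inl () : FVert c), Sum.inr (Sum.inl (⟨0, by omega⟩ : Fin (c - 1)))) = 1 ∨
      lab s((Sum.inl () : FVert c), Sum.inr (Sum.inl (⟨0, by omega⟩ : Fin (c - 1)))) = (c : ℝ)) := by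
  constructor
  · exact ⟨FG.lab c, FG.good_lab hc, FG.card_bound hc⟩
  · intro lb hlb hgood
    exact FG.part2 hc lb hlb hgood ⟨0, by omega⟩ rfl
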